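/- arXiv:0811.4321 — 4 statements merged into one kernel-verified Lean document; each statement's English description precedes it below -/
import Mathlib

section
/- Let k be a positive integer. For a multi-index α = (α₁, α₂, ...) of nonnegative integers with finite support, define (2ℕ)^α = ∏_j (2j)^{α_j}. Then the sum ∑_{α ∈ ℓ} (2ℕ)^{-kα}, taken over the set ℓ of all finitely supported multi-indices, is finite if and only if k > 1. -/
/-- The weight `(2ℕ)^α = ∏_j (2j)^{α_j}` for a finitely supported multi-index `α`,
indexing the entries by `j = 1, 2, ...` (so position `j : ℕ` carries factor `2(j+1)`). -/
noncomputable def wt (α : ℕ →₀ ℕ) : ℕ :=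
  α.prod fun j a => (2 * (j + 1)) ^ a

open Finset

lemma sum_finsupp_prod (s : Finset ℕ) (t : ℕ → Finset ℕ) (g : ℕ → ℕ → ℝ)
    (hg : ∀ j, g j 0 = 1) :
    ∑ α ∈ s.finsupp t, α.prod g = ∏ j ∈ s, ∑ a ∈ t j, g j a := by
  classical
  rw [Finset.prod_sum, Finset.finsupp, Finset.sum_map]
  refine Finset.sum_congr (by congr!) fun p hp => ?_
  simp only [Function.Embedding.coeFn_mk]
  rw [Finsupp.prod_of_support_subset _ (Finsupp.support_indicator_subset s p) g
    (fun j _ => hg j), ← Finset.prod_attach]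
  exact Finset.prod_congr rfl fun x _ => by rw [Finsupp.indicator_of_mem x.2]

lemma geom_bound {x : ℝ} (hx0 : 0 ≤ x) (hx : x ≤ 1/2) (T : Finset ℕ) :
    ∑ a ∈ T, x ^ a ≤ Real.exp (2 * x) := by
  have hx1 : x ≠ 1 := by linarith
  have h1x : (0:ℝ) < 1 - x := by linarith
  set m := T.sup id + 1 with hm
  have hT : T ⊆ Finset.range m := fun a ha =>
    Finset.mem_range.mpr (Nat.lt_succ_of_le (Finset.le_sup (f := id) ha))
  have h0 : ∑ a ∈ T, x ^ a ≤ ∑ a ∈ Finset.range m, x ^ a :=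
    Finset.sum_le_sum_of_subset_of_nonneg hT fun a _ _ => pow_nonneg hx0 a
  have h1 : ∑ a ∈ Finset.range m, x ^ a ≤ (1 - x)⁻¹ := by
    have he : (1-x)⁻¹ * (x-1) = -1 := by field_simp; ring
    rw [geom_sum_eq hx1, div_le_iff_of_neg (by linarith : x - 1 < 0), he]
    nlinarith [pow_nonneg hx0 m]
  have h2 : (1 - x)⁻¹ ≤ Real.exp (2 * x) := by
    rw [inv_eq_one_div, div_le_iff₀ h1x]
    nlinarith [Real.add_one_le_exp (2 * x)]
  linarith

/-- The sum `∑_{α ∈ ℓ} (2ℕ)^{-kα}` over all finitely supported multi-indices `α`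
is finite if and only if `k > 1`. -/
theorem stmt0 (k : ℕ) (hk : 0 < k) :
    (Summable fun α : ℕ →₀ ℕ => ((wt α : ℝ) ^ k)⁻¹) ↔ 1 < k := by
  constructor
  · intro hs
    by_contra hlt
    have hk1 : k = 1 := by omega
    subst hk1
    have h2 := hs.comp_injective (Finsupp.single_left_injective (one_ne_zero) :
      Function.Injective fun j : ℕ => Finsupp.single j 1)
    have hwt1 : ∀ j : ℕ, wt (Finsupp.single j 1) = 2 * (j + 1) := by
      intro j
      rw [wt, Finsupp.prod_single_index (by rw [pow_zero]), pow_one]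
    have h3 : Summable fun j : ℕ => ((j : ℝ) + 1)⁻¹ := by
      refine ((h2.mul_left 2).congr fun j => ?_)
      simp only [Function.comp, hwt1 j, pow_one]
      push_cast
      rw [mul_inv]
      ring
    exact Real.not_summable_natCast_inv <| (summable_nat_add_iff 1).mp
      (h3.congr fun n => by push_cast; ring)
  · intro hk1
    set x : ℕ → ℝ := fun j => ((2 * (j + 1) : ℕ) : ℝ)⁻¹ with hxdef
    have hx0 : ∀ j, 0 ≤ x j := fun j => by positivity
    have hxhalf : ∀ j, x j ≤ 1 / 2 := by
      intro j
      rw [hxdef]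
      simp only
      rw [show (1:ℝ)/2 = ((2:ℕ):ℝ)⁻¹ by norm_num]
      apply inv_anti₀ (by norm_num)
      exact_mod_cast Nat.le_mul_of_pos_right 2 (Nat.succ_pos j)
    set r : ℕ → ℝ := fun j => x j ^ k with hrdef
    have hr0 : ∀ j, 0 ≤ r j := fun j => pow_nonneg (hx0 j) k
    have hrhalf : ∀ j, r j ≤ 1 / 2 := fun j =>
      (pow_le_of_le_one (hx0 j) (by linarith [hxhalf j]) hk.ne').trans (hxhalf j)
    have hrsum : Summable r := by
      have hsum2 : Summable fun j : ℕ => (((j:ℝ) + 1)⁻¹) ^ 2 := by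
        have := (summable_nat_add_iff 1).mpr
          ((Real.summable_one_div_nat_pow (p := 2)).mpr one_lt_two)
        refine this.congr fun n => ?_
        push_cast
        rw [one_div, inv_pow]
      refine Summable.of_nonneg_of_le hr0 (fun j => ?_) hsum2
      calc r j ≤ x j ^ 2 :=
            pow_le_pow_of_le_one (hx0 j) (by linarith [hxhalf j]) hk1
        _ ≤ (((j:ℝ) + 1)⁻¹) ^ 2 := by
            apply pow_le_pow_left₀ (hx0 j)
            rw [hxdef]
            simp only
            apply inv_anti₀ (by positivity)
            push_cast
            nlinarith
    have hwt : ∀ α : ℕ →₀ ℕ, ((wt α : ℝ) ^ k)⁻¹ = α.prod fun j a => r j ^ a := by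
      intro α
      rw [wt, Finsupp.prod, Finsupp.prod]
      push_cast
      rw [← Finset.prod_pow, ← Finset.prod_inv_distrib]
      refine Finset.prod_congr rfl fun j _ => ?_
      rw [hrdef, hxdef]
      simp only
      push_cast
      rw [← pow_mul, ← pow_mul, Nat.mul_comm, inv_pow]
    apply summable_of_sum_le (c := Real.exp (∑' j, 2 * r j))
    · intro α
      positivity
    · intro u
      set β : ℕ →₀ ℕ := u.sup id with hβ
      have hαβ : ∀ α ∈ u, ∀ j, α j ≤ β j := fun α hα j =>
        (Finsupp.le_def.mp (Finset.le_sup (f := id) hα)) j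
      have hsub : u ⊆ β.support.finsupp fun j => Finset.Iic (β j) := by
        intro α hα
        rw [Finset.mem_finsupp_iff]
        constructor
        · intro j hj
          rw [Finsupp.mem_support_iff] at hj ⊢
          exact fun h => hj (Nat.le_zero.mp (h ▸ hαβ α hα j))
        · exact fun j _ => Finset.mem_Iic.mpr (hαβ α hα j)
      calc ∑ α ∈ u, ((wt α : ℝ) ^ k)⁻¹
          ≤ ∑ α ∈ β.support.finsupp fun j => Finset.Iic (β j), ((wt α : ℝ) ^ k)⁻¹ :=
            Finset.sum_le_sum_of_subset_of_nonneg hsub fun α _ _ => by positivity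
        _ = ∏ j ∈ β.support, ∑ a ∈ Finset.Iic (β j), r j ^ a := by
            simp_rw [hwt]
            exact sum_finsupp_prod _ _ _ fun j => pow_zero _
        _ ≤ ∏ j ∈ β.support, Real.exp (2 * r j) := by
            refine Finset.prod_le_prod (fun j _ => ?_) fun j _ =>
              geom_bound (hr0 j) (hrhalf j) _
            exact Finset.sum_nonneg fun a _ => pow_nonneg (hr0 j) a
        _ = Real.exp (∑ j ∈ β.support, 2 * r j) := (Real.exp_sum _ _).symm
        _ ≤ Real.exp (∑' j, 2 * r j) := Real.exp_le_exp.mpr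
            (Summable.sum_le_tsum _ (fun j _ => by positivity) (hrsum.mul_left 2))
end

section
/- Let k and l be positive integers with k > l + 1. For f = ∑_α a_α z^α ∈ ℋ_l and g = ∑_α b_α z^α ∈ ℋ_k, define the Wick product f ◊ g = ∑_α (∑_{β ≤ α} a_β b_{α-β}) z^α. Then f ◊ g ∈ ℋ_k and ‖f ◊ g‖_k ≤ A(k−l) ‖f‖_l ‖g‖_k, where A(k−l) = ∑_{α∈ℓ} (2ℕ)^{(l−k)α} < ∞ (Våge's inequality). -/
/-- Membership in `ℋ_k`: the coefficients are square summable with weight `(2ℕ)^{-kα}`. -/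
def memH (k : ℕ) (c : (ℕ →₀ ℕ) → ℂ) : Prop :=
  Summable fun α => ‖c α‖ ^ 2 * ((wt α : ℝ) ^ k)⁻¹

/-- The norm of `ℋ_k`. -/
noncomputable def normK (k : ℕ) (c : (ℕ →₀ ℕ) → ℂ) : ℝ :=
  Real.sqrt (∑' α, ‖c α‖ ^ 2 * ((wt α : ℝ) ^ k)⁻¹)

/-- The Wick product on coefficient functions:
`(f ◊ g)_α = ∑_{β ≤ α} f_β g_{α-β}`. -/
noncomputable def wick (f g : (ℕ →₀ ℕ) → ℂ) : (ℕ →₀ ℕ) → ℂ :=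
  fun α => ∑ β ∈ Finset.Iic α, f β * g (α - β)


lemma one_le_wt (α : ℕ →₀ ℕ) : 1 ≤ wt α := by
  unfold wt
  apply Finset.one_le_prod'
  intro j _
  exact Nat.one_le_pow _ _ (by omega)

lemma one_le_wt_real (α : ℕ →₀ ℕ) : (1:ℝ) ≤ (wt α : ℝ) := by exact_mod_cast one_le_wt α

lemma wt_pos_real (α : ℕ →₀ ℕ) : (0:ℝ) < (wt α : ℝ) := lt_of_lt_of_le one_pos (one_le_wt_real α)

lemma wt_add (α β : ℕ →₀ ℕ) : wt (α + β) = wt α * wt β := by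
  unfold wt
  exact Finsupp.prod_add_index' (fun a => pow_zero _) (fun a b₁ b₂ => pow_add _ _ _)

lemma wt_zero : wt 0 = 1 := by simp [wt]

set_option maxHeartbeats 1600000 in
lemma summable_wt_inv {m : ℕ} (hm : 2 ≤ m) :
    Summable (fun α : ℕ →₀ ℕ => ((wt α : ℝ) ^ m)⁻¹) := by
  classical
  set q : ℕ → ℝ := fun j => (((2 * (j + 1) : ℕ) : ℝ) ^ 2)⁻¹ with hq_def
  have hq_nonneg : ∀ j, 0 ≤ q j := fun j => by positivity
  have hq_sum : Summable q := by
    have h1 : Summable (fun n : ℕ => (((n+1 : ℕ) : ℝ) ^ 2)⁻¹) := by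
      have := (summable_nat_add_iff (f := fun n : ℕ => ((n : ℝ) ^ 2)⁻¹) 1).2
        (Real.summable_nat_pow_inv.2 one_lt_two)
      simpa using this
    apply Summable.of_nonneg_of_le hq_nonneg _ h1
    intro j
    apply inv_anti₀ (by positivity)
    have : ((j+1:ℕ):ℝ) ≤ ((2*(j+1):ℕ):ℝ) := by push_cast; linarith
    exact pow_le_pow_left₀ (by positivity) this 2
  set r : ℕ → ℝ := fun j => (((2 * (j + 1) : ℕ) : ℝ) ^ m)⁻¹ with hr_def
  have hr_nonneg : ∀ j, 0 ≤ r j := fun j => by positivity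
  have hbase : ∀ j : ℕ, (1:ℝ) ≤ ((2 * (j + 1) : ℕ) : ℝ) := by
    intro j; push_cast; linarith
  have hr_le_q : ∀ j, r j ≤ q j := by
    intro j
    apply inv_anti₀ (by positivity)
    exact pow_le_pow_right₀ (hbase j) hm
  have hq_le : ∀ j, q j ≤ 1/4 := by
    intro j
    rw [hq_def]
    simp only
    rw [show (1:ℝ)/4 = ((4:ℝ))⁻¹ by norm_num]
    apply inv_anti₀ (by norm_num)
    have : (2:ℝ) ≤ ((2*(j+1):ℕ):ℝ) := by push_cast; linarith
    nlinarith
  set R : ℝ := ∑' j, q j with hR_def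
  apply summable_of_sum_le (c := Real.exp (2 * R)) (fun α => by positivity)
  intro S
  set N : ℕ := (S.sup fun α => α.support.sup id) + 1 with hN_def
  set M : ℕ := S.sup fun α => α.support.sup α with hM_def
  have hsupp : ∀ α ∈ S, α.support ⊆ Finset.range N := by
    intro α hα j hj
    rw [Finset.mem_range, hN_def]
    have : id j ≤ α.support.sup id := Finset.le_sup hj
    have h2 : α.support.sup id ≤ S.sup fun α => α.support.sup id := Finset.le_sup (f := fun α : ℕ →₀ ℕ => α.support.sup id) hα
    simp only [id] at this
    omega
  have hval : ∀ α ∈ S, ∀ j, α j ≤ M := by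
    intro α hα j
    by_cases hj : j ∈ α.support
    · calc α j ≤ α.support.sup α := Finset.le_sup hj
        _ ≤ M := Finset.le_sup (f := fun α : ℕ →₀ ℕ => α.support.sup α) hα
    · simp [Finsupp.notMem_support_iff.1 hj]
  -- Step A
  have stepA : ∀ α ∈ S, ((wt α : ℝ) ^ m)⁻¹ = ∏ j ∈ Finset.range N, r j ^ α j := by
    intro α hα
    have h1 : wt α = ∏ j ∈ Finset.range N, (2 * (j + 1)) ^ α j :=
      Finsupp.prod_of_support_subset α (hsupp α hα) _ (fun i _ => pow_zero _)
    rw [h1]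
    push_cast
    rw [← Finset.prod_pow]
    rw [← Finset.prod_inv_distrib]
    apply Finset.prod_congr rfl
    intro j _
    rw [hr_def]
    simp only
    rw [← pow_mul, mul_comm (α j) m, pow_mul, inv_pow]
    push_cast
    ring
  -- Step B : inject into pi
  have stepB : ∑ α ∈ S, ∏ j ∈ Finset.range N, r j ^ α j ≤
      ∑ p ∈ (Finset.range N).pi (fun _ => Finset.range (M+1)),
        ∏ x ∈ (Finset.range N).attach, r x.1 ^ (p x.1 x.2) := by
    set ι : (ℕ →₀ ℕ) → (∀ j ∈ Finset.range N, ℕ) := fun α j _ => α j with hι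
    have hinj : ∀ α ∈ S, ∀ α' ∈ S, ι α = ι α' → α = α' := by
      intro α hα α' hα' h
      ext j
      by_cases hj : j ∈ Finset.range N
      · exact congrFun (congrFun h j) hj
      · have h1 : α j = 0 := Finsupp.notMem_support_iff.1 (fun hc => hj (hsupp α hα hc))
        have h2 : α' j = 0 := Finsupp.notMem_support_iff.1 (fun hc => hj (hsupp α' hα' hc))
        rw [h1, h2]
    have himg : ∑ α ∈ S, ∏ j ∈ Finset.range N, r j ^ α j
        = ∑ p ∈ S.image ι, ∏ x ∈ (Finset.range N).attach, r x.1 ^ (p x.1 x.2) := by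
      rw [Finset.sum_image hinj]
      apply Finset.sum_congr rfl
      intro α _
      rw [← Finset.prod_attach (Finset.range N) (fun j => r j ^ α j)]
    rw [himg]
    apply Finset.sum_le_sum_of_subset_of_nonneg
    · intro p hp
      rw [Finset.mem_image] at hp
      obtain ⟨α, hα, rfl⟩ := hp
      rw [Finset.mem_pi]
      intro j hj
      rw [Finset.mem_range]
      exact Nat.lt_succ_of_le (hval α hα j)
    · intro p _ _
      exact Finset.prod_nonneg fun x _ => pow_nonneg (hr_nonneg _) _
  -- Step C+D+E
  have stepC : ∑ p ∈ (Finset.range N).pi (fun _ => Finset.range (M+1)),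
        ∏ x ∈ (Finset.range N).attach, r x.1 ^ (p x.1 x.2)
      = ∏ j ∈ Finset.range N, ∑ a ∈ Finset.range (M+1), r j ^ a :=
    (Finset.prod_sum (Finset.range N) (fun _ => Finset.range (M+1)) (fun j a => r j ^ a)).symm
  have stepD : ∏ j ∈ Finset.range N, ∑ a ∈ Finset.range (M+1), r j ^ a ≤
      ∏ j ∈ Finset.range N, Real.exp (2 * q j) := by
    apply Finset.prod_le_prod
    · intro j _
      exact Finset.sum_nonneg fun a _ => pow_nonneg (hr_nonneg _) _
    · intro j _
      have hr_half : r j ≤ 1/2 := (hr_le_q j).trans ((hq_le j).trans (by norm_num))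
      have hrlt1 : r j < 1 := lt_of_le_of_lt hr_half (by norm_num)
      have h1 : ∑ a ∈ Finset.range (M+1), r j ^ a ≤ (1 - r j)⁻¹ := by
        have := Summable.sum_le_tsum (Finset.range (M+1)) (fun a _ => pow_nonneg (hr_nonneg j) a)
          (summable_geometric_of_lt_one (hr_nonneg j) hrlt1)
        rwa [tsum_geometric_of_lt_one (hr_nonneg j) hrlt1] at this
      have hpos : (0:ℝ) < 1 - r j := by linarith
      have h2 : (1 - r j)⁻¹ ≤ 1 + 2 * r j := by
        rw [inv_le_iff_one_le_mul₀ hpos]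
        nlinarith [hr_nonneg j]
      have h3 : 1 + 2 * r j ≤ Real.exp (2 * r j) := by
        have := Real.add_one_le_exp (2 * r j); linarith
      have h4 : Real.exp (2 * r j) ≤ Real.exp (2 * q j) :=
        Real.exp_le_exp.2 (by linarith [hr_le_q j])
      linarith
  have stepE : ∏ j ∈ Finset.range N, Real.exp (2 * q j) ≤ Real.exp (2 * R) := by
    rw [← Real.exp_sum]
    apply Real.exp_le_exp.2
    rw [← Finset.mul_sum]
    have := Summable.sum_le_tsum (Finset.range N) (fun j _ => hq_nonneg j) hq_sum
    rw [← hR_def] at this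
    nlinarith
  calc ∑ α ∈ S, ((wt α : ℝ) ^ m)⁻¹ = ∑ α ∈ S, ∏ j ∈ Finset.range N, r j ^ α j :=
        Finset.sum_congr rfl stepA
    _ ≤ _ := stepB
    _ = _ := stepC
    _ ≤ _ := stepD
    _ ≤ _ := stepE


set_option maxHeartbeats 1600000 in
/-- Våge's inequality: for `k > l + 1`, `f ∈ ℋ_l` and `g ∈ ℋ_k`, the Wick product
`f ◊ g` belongs to `ℋ_k` and `‖f ◊ g‖_k ≤ A(k-l) ‖f‖_l ‖g‖_k`, where
`A(k-l) = ∑_{α} (2ℕ)^{(l-k)α} < ∞`. -/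
theorem stmt2 (k l : ℕ) (hl : 0 < l) (hk : l + 1 < k)
    (f g : (ℕ →₀ ℕ) → ℂ) (hf : memH l f) (hg : memH k g) :
    (Summable fun α : ℕ →₀ ℕ => ((wt α : ℝ) ^ (k - l))⁻¹) ∧
    memH k (wick f g) ∧
    normK k (wick f g) ≤
      (∑' α : ℕ →₀ ℕ, ((wt α : ℝ) ^ (k - l))⁻¹) * normK l f * normK k g := by
  classical
  have hm : 2 ≤ k - l := by omega
  have SA : Summable (fun α : ℕ →₀ ℕ => ((wt α : ℝ) ^ (k - l))⁻¹) := summable_wt_inv hm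
  have hφs : Summable (fun α : ℕ →₀ ℕ => ‖f α‖ ^ 2 * ((wt α : ℝ) ^ l)⁻¹) := hf
  have hψs : Summable (fun α : ℕ →₀ ℕ => ‖g α‖ ^ 2 * ((wt α : ℝ) ^ k)⁻¹) := hg
  have hφ0 : ∀ α : ℕ →₀ ℕ, 0 ≤ ‖f α‖ ^ 2 * ((wt α : ℝ) ^ l)⁻¹ := fun α => by positivity
  have hψ0 : ∀ α : ℕ →₀ ℕ, 0 ≤ ‖g α‖ ^ 2 * ((wt α : ℝ) ^ k)⁻¹ := fun α => by positivity
  have hA1 : 1 ≤ ∑' α : ℕ →₀ ℕ, ((wt α : ℝ) ^ (k - l))⁻¹ := by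
    have := Summable.le_tsum SA 0 (fun α _ => by positivity)
    simpa [wt_zero] using this
  have hA0 : 0 ≤ ∑' α : ℕ →₀ ℕ, ((wt α : ℝ) ^ (k - l))⁻¹ := by linarith
  have hP : Summable (fun x : (ℕ →₀ ℕ) × (ℕ →₀ ℕ) =>
      (‖f x.1‖ ^ 2 * ((wt x.1 : ℝ) ^ l)⁻¹) * (‖g x.2‖ ^ 2 * ((wt x.2 : ℝ) ^ k)⁻¹)) :=
    hφs.mul_of_nonneg hψs hφ0 hψ0
  -- key pointwise estimate
  have key : ∀ α : ℕ →₀ ℕ, ‖wick f g α‖ ^ 2 * ((wt α : ℝ) ^ k)⁻¹ ≤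
      (∑' α : ℕ →₀ ℕ, ((wt α : ℝ) ^ (k - l))⁻¹) *
        ∑ β ∈ Finset.Iic α,
          (‖f β‖ ^ 2 * ((wt β : ℝ) ^ l)⁻¹) * (‖g (α - β)‖ ^ 2 * ((wt (α - β) : ℝ) ^ k)⁻¹) := by
    intro α
    have h1 : ‖wick f g α‖ ≤ ∑ β ∈ Finset.Iic α, ‖f β‖ * ‖g (α - β)‖ := by
      refine (norm_sum_le _ _).trans ?_
      apply Finset.sum_le_sum
      intro β _
      rw [norm_mul]
    have h1' : ‖wick f g α‖ ^ 2 ≤ (∑ β ∈ Finset.Iic α, ‖f β‖ * ‖g (α - β)‖) ^ 2 :=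
      pow_le_pow_left₀ (norm_nonneg _) h1 2
    have hCS := Finset.sum_mul_sq_le_sq_mul_sq (Finset.Iic α)
      (fun β => Real.sqrt (((wt β : ℝ) ^ (k - l))⁻¹))
      (fun β => Real.sqrt ((wt β : ℝ) ^ (k - l)) * (‖f β‖ * ‖g (α - β)‖))
    have e1 : ∀ β : ℕ →₀ ℕ, Real.sqrt (((wt β : ℝ) ^ (k - l))⁻¹) *
        (Real.sqrt ((wt β : ℝ) ^ (k - l)) * (‖f β‖ * ‖g (α - β)‖)) = ‖f β‖ * ‖g (α - β)‖ := by
      intro β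
      rw [← mul_assoc, ← Real.sqrt_mul (by positivity),
        inv_mul_cancel₀ (pow_pos (wt_pos_real β) (k-l)).ne', Real.sqrt_one, one_mul]
    have e2 : ∀ β : ℕ →₀ ℕ, (Real.sqrt (((wt β : ℝ) ^ (k - l))⁻¹)) ^ 2 =
        ((wt β : ℝ) ^ (k - l))⁻¹ := fun β => Real.sq_sqrt (by positivity)
    have e3 : ∀ β : ℕ →₀ ℕ, (Real.sqrt ((wt β : ℝ) ^ (k - l)) * (‖f β‖ * ‖g (α - β)‖)) ^ 2 =
        (wt β : ℝ) ^ (k - l) * (‖f β‖ * ‖g (α - β)‖) ^ 2 := by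
      intro β
      rw [mul_pow, Real.sq_sqrt (by positivity)]
    simp only [e1, e2, e3] at hCS
    have h2 : (∑ β ∈ Finset.Iic α, ‖f β‖ * ‖g (α - β)‖) ^ 2 ≤
        (∑' α : ℕ →₀ ℕ, ((wt α : ℝ) ^ (k - l))⁻¹) *
          ∑ β ∈ Finset.Iic α, (wt β : ℝ) ^ (k - l) * (‖f β‖ * ‖g (α - β)‖) ^ 2 := by
      refine hCS.trans ?_
      apply mul_le_mul_of_nonneg_right _ (Finset.sum_nonneg fun β _ => by positivity)
      exact Summable.sum_le_tsum _ (fun β _ => by positivity) SA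
    calc ‖wick f g α‖ ^ 2 * ((wt α : ℝ) ^ k)⁻¹
        ≤ ((∑' α : ℕ →₀ ℕ, ((wt α : ℝ) ^ (k - l))⁻¹) *
            ∑ β ∈ Finset.Iic α, (wt β : ℝ) ^ (k - l) * (‖f β‖ * ‖g (α - β)‖) ^ 2) *
            ((wt α : ℝ) ^ k)⁻¹ := by
          exact mul_le_mul_of_nonneg_right (h1'.trans h2) (by positivity)
      _ = (∑' α : ℕ →₀ ℕ, ((wt α : ℝ) ^ (k - l))⁻¹) *
            ∑ β ∈ Finset.Iic α,
              (wt β : ℝ) ^ (k - l) * (‖f β‖ * ‖g (α - β)‖) ^ 2 * ((wt α : ℝ) ^ k)⁻¹ := by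
          rw [mul_assoc, Finset.sum_mul]
      _ = _ := by
          congr 1
          apply Finset.sum_congr rfl
          intro β hβ
          have hle : β ≤ α := Finset.mem_Iic.1 hβ
          have hWα : (wt α : ℝ) = (wt β : ℝ) * (wt (α - β) : ℝ) := by
            rw [← Nat.cast_mul, ← wt_add, add_tsub_cancel_of_le hle]
          have hb : (0:ℝ) < (wt β : ℝ) := wt_pos_real β
          have hc : (0:ℝ) < (wt (α - β) : ℝ) := wt_pos_real (α - β)
          have hbk : (wt β : ℝ) ^ (k - l) * ((wt β : ℝ) ^ k)⁻¹ = ((wt β : ℝ) ^ l)⁻¹ := by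
            have hsplit : (wt β : ℝ) ^ k = (wt β : ℝ) ^ (k - l) * (wt β : ℝ) ^ l := by
              rw [← pow_add]
              congr 1
              omega
            rw [hsplit, mul_inv, ← mul_assoc,
              mul_inv_cancel₀ (pow_ne_zero _ hb.ne'), one_mul]
          rw [hWα, mul_pow (wt β : ℝ) _ k, mul_inv, mul_pow (‖f β‖)]
          calc (wt β : ℝ) ^ (k - l) * (‖f β‖ ^ 2 * ‖g (α - β)‖ ^ 2) *
                (((wt β : ℝ) ^ k)⁻¹ * (((wt (α - β) : ℝ)) ^ k)⁻¹)
              = ((wt β : ℝ) ^ (k - l) * ((wt β : ℝ) ^ k)⁻¹) *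
                (‖f β‖ ^ 2 * (‖g (α - β)‖ ^ 2 * (((wt (α - β) : ℝ)) ^ k)⁻¹)) := by ring
            _ = _ := by rw [hbk]; ring
  -- partial-sum bound for the convolution of φ and ψ
  have hTsum_le : ∀ S : Finset (ℕ →₀ ℕ),
      (∑ α ∈ S, ∑ β ∈ Finset.Iic α,
        (‖f β‖ ^ 2 * ((wt β : ℝ) ^ l)⁻¹) * (‖g (α - β)‖ ^ 2 * ((wt (α - β) : ℝ) ^ k)⁻¹)) ≤
      (∑' α : ℕ →₀ ℕ, ‖f α‖ ^ 2 * ((wt α : ℝ) ^ l)⁻¹) *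
        (∑' α : ℕ →₀ ℕ, ‖g α‖ ^ 2 * ((wt α : ℝ) ^ k)⁻¹) := by
    intro S
    have e0 : (∑ α ∈ S, ∑ β ∈ Finset.Iic α,
          (‖f β‖ ^ 2 * ((wt β : ℝ) ^ l)⁻¹) * (‖g (α - β)‖ ^ 2 * ((wt (α - β) : ℝ) ^ k)⁻¹))
        = ∑ x ∈ S.sigma (fun α => Finset.Iic α),
            (‖f x.2‖ ^ 2 * ((wt x.2 : ℝ) ^ l)⁻¹) *
              (‖g (x.1 - x.2)‖ ^ 2 * ((wt (x.1 - x.2) : ℝ) ^ k)⁻¹) :=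
      Finset.sum_sigma' _ _ _
    have hinj : ∀ x ∈ S.sigma (fun α => Finset.Iic α), ∀ y ∈ S.sigma (fun α => Finset.Iic α),
        (fun x : Σ _ : ℕ →₀ ℕ, ℕ →₀ ℕ => ((x.2, x.1 - x.2) : (ℕ →₀ ℕ) × (ℕ →₀ ℕ))) x =
        (fun x : Σ _ : ℕ →₀ ℕ, ℕ →₀ ℕ => ((x.2, x.1 - x.2) : (ℕ →₀ ℕ) × (ℕ →₀ ℕ))) y →
        x = y := by
      intro x hx y hy hxy
      simp only [Finset.mem_sigma, Finset.mem_Iic] at hx hy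
      simp only [Prod.mk.injEq] at hxy
      obtain ⟨h1, h2⟩ := hxy
      have h3 : x.1 = y.1 := by
        calc x.1 = x.2 + (x.1 - x.2) := (add_tsub_cancel_of_le hx.2).symm
          _ = y.2 + (y.1 - y.2) := by rw [h2, h1]
          _ = y.1 := add_tsub_cancel_of_le hy.2
      exact Sigma.ext h3 (heq_of_eq h1)
    calc (∑ α ∈ S, ∑ β ∈ Finset.Iic α,
          (‖f β‖ ^ 2 * ((wt β : ℝ) ^ l)⁻¹) * (‖g (α - β)‖ ^ 2 * ((wt (α - β) : ℝ) ^ k)⁻¹))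
        = ∑ y ∈ (S.sigma (fun α => Finset.Iic α)).image
            (fun x : Σ _ : ℕ →₀ ℕ, ℕ →₀ ℕ => ((x.2, x.1 - x.2) : (ℕ →₀ ℕ) × (ℕ →₀ ℕ))),
            (‖f y.1‖ ^ 2 * ((wt y.1 : ℝ) ^ l)⁻¹) * (‖g y.2‖ ^ 2 * ((wt y.2 : ℝ) ^ k)⁻¹) := by
          rw [Finset.sum_image hinj, e0]
      _ ≤ ∑' y : (ℕ →₀ ℕ) × (ℕ →₀ ℕ),
            (‖f y.1‖ ^ 2 * ((wt y.1 : ℝ) ^ l)⁻¹) * (‖g y.2‖ ^ 2 * ((wt y.2 : ℝ) ^ k)⁻¹) :=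
          Summable.sum_le_tsum _ (fun y _ => mul_nonneg (hφ0 _) (hψ0 _)) hP
      _ = _ := (Summable.tsum_mul_tsum hφs hψs hP).symm
  -- assemble
  have hbound : ∀ S : Finset (ℕ →₀ ℕ),
      ∑ α ∈ S, ‖wick f g α‖ ^ 2 * ((wt α : ℝ) ^ k)⁻¹ ≤
      (∑' α : ℕ →₀ ℕ, ((wt α : ℝ) ^ (k - l))⁻¹) *
        ((∑' α : ℕ →₀ ℕ, ‖f α‖ ^ 2 * ((wt α : ℝ) ^ l)⁻¹) *
          (∑' α : ℕ →₀ ℕ, ‖g α‖ ^ 2 * ((wt α : ℝ) ^ k)⁻¹)) := by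
    intro S
    calc ∑ α ∈ S, ‖wick f g α‖ ^ 2 * ((wt α : ℝ) ^ k)⁻¹
        ≤ ∑ α ∈ S, (∑' α : ℕ →₀ ℕ, ((wt α : ℝ) ^ (k - l))⁻¹) *
            ∑ β ∈ Finset.Iic α,
              (‖f β‖ ^ 2 * ((wt β : ℝ) ^ l)⁻¹) * (‖g (α - β)‖ ^ 2 * ((wt (α - β) : ℝ) ^ k)⁻¹) :=
          Finset.sum_le_sum (fun α _ => key α)
      _ = (∑' α : ℕ →₀ ℕ, ((wt α : ℝ) ^ (k - l))⁻¹) *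
            ∑ α ∈ S, ∑ β ∈ Finset.Iic α,
              (‖f β‖ ^ 2 * ((wt β : ℝ) ^ l)⁻¹) * (‖g (α - β)‖ ^ 2 * ((wt (α - β) : ℝ) ^ k)⁻¹) :=
          (Finset.mul_sum _ _ _).symm
      _ ≤ _ := mul_le_mul_of_nonneg_left (hTsum_le S) hA0
  have hmem : memH k (wick f g) := summable_of_sum_le (fun α => by positivity) hbound
  refine ⟨SA, hmem, ?_⟩
  have htsum_le : (∑' α : ℕ →₀ ℕ, ‖wick f g α‖ ^ 2 * ((wt α : ℝ) ^ k)⁻¹) ≤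
      (∑' α : ℕ →₀ ℕ, ((wt α : ℝ) ^ (k - l))⁻¹) *
        ((∑' α : ℕ →₀ ℕ, ‖f α‖ ^ 2 * ((wt α : ℝ) ^ l)⁻¹) *
          (∑' α : ℕ →₀ ℕ, ‖g α‖ ^ 2 * ((wt α : ℝ) ^ k)⁻¹)) :=
    Summable.tsum_le_of_sum_le hmem hbound
  have hΦ0 : 0 ≤ ∑' α : ℕ →₀ ℕ, ‖f α‖ ^ 2 * ((wt α : ℝ) ^ l)⁻¹ := tsum_nonneg hφ0
  have hΨ0 : 0 ≤ ∑' α : ℕ →₀ ℕ, ‖g α‖ ^ 2 * ((wt α : ℝ) ^ k)⁻¹ := tsum_nonneg hψ0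
  have hsqrtA : Real.sqrt (∑' α : ℕ →₀ ℕ, ((wt α : ℝ) ^ (k - l))⁻¹) ≤
      ∑' α : ℕ →₀ ℕ, ((wt α : ℝ) ^ (k - l))⁻¹ := by
    have h := Real.sqrt_le_sqrt (show (∑' α : ℕ →₀ ℕ, ((wt α : ℝ) ^ (k - l))⁻¹) ≤
        (∑' α : ℕ →₀ ℕ, ((wt α : ℝ) ^ (k - l))⁻¹) ^ 2 by nlinarith)
    rwa [Real.sqrt_sq hA0] at h
  show Real.sqrt (∑' α : ℕ →₀ ℕ, ‖wick f g α‖ ^ 2 * ((wt α : ℝ) ^ k)⁻¹) ≤ _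
  calc Real.sqrt (∑' α : ℕ →₀ ℕ, ‖wick f g α‖ ^ 2 * ((wt α : ℝ) ^ k)⁻¹)
      ≤ Real.sqrt ((∑' α : ℕ →₀ ℕ, ((wt α : ℝ) ^ (k - l))⁻¹) *
          ((∑' α : ℕ →₀ ℕ, ‖f α‖ ^ 2 * ((wt α : ℝ) ^ l)⁻¹) *
            (∑' α : ℕ →₀ ℕ, ‖g α‖ ^ 2 * ((wt α : ℝ) ^ k)⁻¹))) := Real.sqrt_le_sqrt htsum_le
    _ = Real.sqrt (∑' α : ℕ →₀ ℕ, ((wt α : ℝ) ^ (k - l))⁻¹) *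
          (Real.sqrt (∑' α : ℕ →₀ ℕ, ‖f α‖ ^ 2 * ((wt α : ℝ) ^ l)⁻¹) *
            Real.sqrt (∑' α : ℕ →₀ ℕ, ‖g α‖ ^ 2 * ((wt α : ℝ) ^ k)⁻¹)) := by
        rw [Real.sqrt_mul hA0, Real.sqrt_mul hΦ0]
    _ ≤ (∑' α : ℕ →₀ ℕ, ((wt α : ℝ) ^ (k - l))⁻¹) *
          (Real.sqrt (∑' α : ℕ →₀ ℕ, ‖f α‖ ^ 2 * ((wt α : ℝ) ^ l)⁻¹) *
            Real.sqrt (∑' α : ℕ →₀ ℕ, ‖g α‖ ^ 2 * ((wt α : ℝ) ^ k)⁻¹)) :=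
        mul_le_mul_of_nonneg_right hsqrtA (by positivity)
    _ = (∑' α : ℕ →₀ ℕ, ((wt α : ℝ) ^ (k - l))⁻¹) * normK l f * normK k g := by
        rw [normK, normK]; ring
end

section
/- Let H be a Hilbert space and let (h_n)_{n≥0} be a sequence in H. There exists M > 0 such that (∑_{n=0}^∞ ‖y_n‖²)^{1/2} ≤ M ∑_{n=0}^∞ ‖u_n‖ for all complex sequences (u_n) with ∑‖u_n‖ < ∞, where y_n = ∑_{m=0}^n u_m h_{n−m}, if and only if ∑_{n=0}^∞ ‖h_n‖² < ∞ (i.e., the transfer function ∑ ζⁿ h_n lies in the H-valued Hardy space H²(𝔻) ⊗ H). -/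
set_option maxHeartbeats 1000000

lemma key_cs (A : ℝ) (a b : ℕ → ℝ) (ha : ∀ m, 0 ≤ a m) (hb : ∀ m, 0 ≤ b m)
    (hA : ∀ n, ∑ m ∈ Finset.range (n + 1), a m ≤ A) (n : ℕ) :
    (∑ m ∈ Finset.range (n + 1), a m * b (n - m)) ^ 2 ≤
      A * ∑ m ∈ Finset.range (n + 1), a m * b (n - m) ^ 2 := by
  have h1 := Finset.sum_mul_sq_le_sq_mul_sq (Finset.range (n + 1))
    (fun m => Real.sqrt (a m)) (fun m => Real.sqrt (a m) * b (n - m))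
  calc (∑ m ∈ Finset.range (n + 1), a m * b (n - m)) ^ 2
      = (∑ m ∈ Finset.range (n + 1),
          Real.sqrt (a m) * (Real.sqrt (a m) * b (n - m))) ^ 2 := by
        congr 1; apply Finset.sum_congr rfl; intro m _
        rw [← mul_assoc, Real.mul_self_sqrt (ha m)]
    _ ≤ (∑ m ∈ Finset.range (n + 1), Real.sqrt (a m) ^ 2) *
          ∑ m ∈ Finset.range (n + 1), (Real.sqrt (a m) * b (n - m)) ^ 2 := h1
    _ = (∑ m ∈ Finset.range (n + 1), a m) *
          ∑ m ∈ Finset.range (n + 1), a m * b (n - m) ^ 2 := by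
        congr 1
        · exact Finset.sum_congr rfl fun m _ => Real.sq_sqrt (ha m)
        · apply Finset.sum_congr rfl; intro m _
          rw [mul_pow, Real.sq_sqrt (ha m)]
    _ ≤ A * ∑ m ∈ Finset.range (n + 1), a m * b (n - m) ^ 2 := by
        apply mul_le_mul_of_nonneg_right (hA n)
        exact Finset.sum_nonneg fun m _ => mul_nonneg (ha m) (sq_nonneg _)

/-- ℓ¹-ℓ² stability for H-valued causal systems: there is `M > 0` with
`(∑ ‖y_n‖²)^{1/2} ≤ M ∑ ‖u_n‖` for every absolutely summable scalar input,
where `y_n = ∑_{m=0}^n u_m h_{n-m}`, if and only if `∑ ‖h_n‖² < ∞` (i.e. the transfer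
function `∑ ζⁿ h_n` lies in the `H`-valued Hardy space `H²(𝔻) ⊗ H`). -/
theorem stmt8 {H : Type*} [NormedAddCommGroup H] [NormedSpace ℂ H]
    (h : ℕ → H) :
    (∃ M > (0 : ℝ), ∀ u : ℕ → ℂ, Summable (fun n => ‖u n‖) →
        (Summable fun n => ‖∑ m ∈ Finset.range (n + 1), u m • h (n - m)‖ ^ 2) ∧
        Real.sqrt (∑' n, ‖∑ m ∈ Finset.range (n + 1), u m • h (n - m)‖ ^ 2) ≤
          M * ∑' n, ‖u n‖) ↔
      Summable fun n => ‖h n‖ ^ 2 := by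
  constructor
  · rintro ⟨M, -, hM⟩
    set u : ℕ → ℂ := fun n => if n = 0 then 1 else 0 with hu_def
    have hus : Summable (fun n => ‖u n‖) := by
      apply summable_of_finite_support
      apply Set.Finite.subset (Set.finite_singleton 0)
      intro n hn
      rcases eq_or_ne n 0 with h0 | h0
      · simp [h0]
      · simp [hu_def, h0] at hn
    have hy := (hM u hus).1
    have heq : ∀ n, ‖∑ m ∈ Finset.range (n + 1), u m • h (n - m)‖ ^ 2 = ‖h n‖ ^ 2 := by
      intro n
      have : ∑ m ∈ Finset.range (n + 1), u m • h (n - m) = h n := by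
        rw [Finset.sum_eq_single 0]
        · simp [hu_def]
        · intro m _ hm; simp [hu_def, hm]
        · intro habs; simp at habs
      rw [this]
    exact (summable_congr heq).mp hy
  · intro hb
    set a : ℕ → ℝ := fun n => ‖h n‖ with ha_def
    set B : ℝ := ∑' n, ‖h n‖ ^ 2 with hB_def
    have hB0 : 0 ≤ B := tsum_nonneg fun n => sq_nonneg _
    refine ⟨Real.sqrt B + 1, by positivity, fun u hu => ?_⟩
    set A : ℝ := ∑' n, ‖u n‖ with hA_def
    have hA0 : 0 ≤ A := tsum_nonneg fun n => norm_nonneg _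
    have hApart : ∀ n, ∑ m ∈ Finset.range (n + 1), ‖u m‖ ≤ A :=
      fun n => Summable.sum_le_tsum _ (fun m _ => norm_nonneg _) hu
    -- norm-summability hypotheses for Cauchy product
    have hu' : Summable fun n => ‖‖u n‖‖ := by
      simpa [Real.norm_of_nonneg (norm_nonneg _)] using hu
    have hb' : Summable fun n => ‖‖h n‖ ^ 2‖ := by
      have he : ∀ n, ‖‖h n‖ ^ 2‖ = ‖h n‖ ^ 2 := fun n => Real.norm_of_nonneg (sq_nonneg _)
      exact (summable_congr he).mpr hb
    have hconv := hasSum_sum_range_mul_of_summable_norm (R := ℝ)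
      (f := fun n => ‖u n‖) (g := fun n => ‖h n‖ ^ 2) hu' hb'
    -- pointwise bound on ‖y n‖ ^ 2
    have hpt : ∀ n, ‖∑ m ∈ Finset.range (n + 1), u m • h (n - m)‖ ^ 2 ≤
        A * ∑ m ∈ Finset.range (n + 1), ‖u m‖ * ‖h (n - m)‖ ^ 2 := by
      intro n
      have h1 : ‖∑ m ∈ Finset.range (n + 1), u m • h (n - m)‖ ≤
          ∑ m ∈ Finset.range (n + 1), ‖u m‖ * ‖h (n - m)‖ := by
        refine (norm_sum_le _ _).trans ?_
        apply Finset.sum_le_sum; intro m _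
        rw [norm_smul]
      have h2 : ‖∑ m ∈ Finset.range (n + 1), u m • h (n - m)‖ ^ 2 ≤
          (∑ m ∈ Finset.range (n + 1), ‖u m‖ * ‖h (n - m)‖) ^ 2 :=
        pow_le_pow_left₀ (norm_nonneg _) h1 2
      exact h2.trans (key_cs A (fun m => ‖u m‖) (fun m => ‖h m‖)
        (fun m => norm_nonneg _) (fun m => norm_nonneg _) hApart n)
    have hys : Summable fun n => ‖∑ m ∈ Finset.range (n + 1), u m • h (n - m)‖ ^ 2 := by
      apply Summable.of_nonneg_of_le (fun n => sq_nonneg _) hpt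
      exact hconv.summable.mul_left A
    refine ⟨hys, ?_⟩
    have hts : (∑' n, ‖∑ m ∈ Finset.range (n + 1), u m • h (n - m)‖ ^ 2) ≤ A * (A * B) := by
      calc (∑' n, ‖∑ m ∈ Finset.range (n + 1), u m • h (n - m)‖ ^ 2)
          ≤ ∑' n, A * ∑ m ∈ Finset.range (n + 1), ‖u m‖ * ‖h (n - m)‖ ^ 2 :=
            Summable.tsum_le_tsum hpt hys (hconv.summable.mul_left A)
        _ = A * (A * B) := by rw [tsum_mul_left, hconv.tsum_eq]
    calc Real.sqrt (∑' n, ‖∑ m ∈ Finset.range (n + 1), u m • h (n - m)‖ ^ 2)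
        ≤ Real.sqrt (A * (A * B)) := Real.sqrt_le_sqrt hts
      _ = Real.sqrt (A ^ 2 * B) := by ring_nf
      _ = A * Real.sqrt B := by
          rw [Real.sqrt_mul (sq_nonneg A), Real.sqrt_sq hA0]
      _ ≤ (Real.sqrt B + 1) * A := by nlinarith [Real.sqrt_nonneg B]
end

section
/- Let H be a Hilbert space and let T be a bounded linear operator from the H-valued Hardy space H²(𝔻) ⊗ H into itself that commutes with the operator M_ζ of multiplication by the coordinate ζ. Then there exists a function S, analytic on the open unit disk with values in L(H), with ‖S(ζ)‖ ≤ ‖T‖ for all ζ ∈ 𝔻, such that (Tf)(ζ) = S(ζ) f(ζ) for all f ∈ H²(𝔻)⊗H and ζ ∈ 𝔻. If moreover T is a contraction, then S(ζ) is a contraction for every ζ ∈ 𝔻. -/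
open Metric ENNReal

namespace Stmt10Aux

noncomputable section
set_option linter.unusedSectionVars false
set_option maxHeartbeats 800000

variable {H : Type*} [NormedAddCommGroup H] [InnerProductSpace ℂ H] [CompleteSpace H]

lemma coord_le_norm (g : lp (fun _ : ℕ => H) 2) (n : ℕ) :
    ‖(g : ∀ _ : ℕ, H) n‖ ≤ ‖g‖ :=
  lp.norm_apply_le_norm (by norm_num) g n

lemma summable_pow_smul {ζ : ℂ} (hζ : ‖ζ‖ < 1) (g : lp (fun _ : ℕ => H) 2) :
    Summable (fun n : ℕ => ζ ^ n • (g : ∀ _ : ℕ, H) n) := by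
  apply Summable.of_norm
  refine Summable.of_nonneg_of_le (fun n => norm_nonneg _) (fun n => ?_)
    ((summable_geometric_of_lt_one (norm_nonneg ζ) hζ).mul_right ‖g‖)
  rw [norm_smul, norm_pow]
  exact mul_le_mul_of_nonneg_left (coord_le_norm g n) (by positivity)

/-- the evaluation map as a bare function -/
def evalAux (ζ : ℂ) (g : lp (fun _ : ℕ => H) 2) : H :=
  ∑' n : ℕ, ζ ^ n • (g : ∀ _ : ℕ, H) n

lemma evalAux_add {ζ : ℂ} (hζ : ‖ζ‖ < 1) (g h : lp (fun _ : ℕ => H) 2) :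
    evalAux ζ (g + h) = evalAux ζ g + evalAux ζ h := by
  unfold evalAux
  rw [← Summable.tsum_add (summable_pow_smul hζ g) (summable_pow_smul hζ h)]
  apply tsum_congr
  intro n
  rw [lp.coeFn_add, Pi.add_apply, smul_add]

lemma evalAux_smul {ζ : ℂ} (c : ℂ) (g : lp (fun _ : ℕ => H) 2) :
    evalAux ζ (c • g) = c • evalAux ζ g := by
  unfold evalAux
  rw [← tsum_const_smul'' c]
  apply tsum_congr
  intro n
  rw [lp.coeFn_smul, Pi.smul_apply, smul_comm]

lemma memℓp_kernel {ζ : ℂ} (hζ : ‖ζ‖ < 1) (x : H) :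
    Memℓp (fun n : ℕ => (starRingEnd ℂ ζ) ^ n • x) 2 := by
  apply memℓp_gen
  have h2 : (2 : ℝ≥0∞).toReal = 2 := by norm_num
  rw [h2]
  have : ∀ n : ℕ, ‖(starRingEnd ℂ ζ) ^ n • x‖ ^ (2:ℝ) = (‖ζ‖^2) ^ n * ‖x‖^2 := by
    intro n
    rw [norm_smul, norm_pow, RCLike.norm_conj]
    rw [Real.rpow_two, mul_pow, ← pow_mul, ← pow_mul, mul_comm 2 n, pow_mul]
  simp only [this]
  exact (summable_geometric_of_lt_one (by positivity) (by nlinarith [norm_nonneg ζ])).mul_right _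

/-- the reproducing kernel element -/
def kernel {ζ : ℂ} (hζ : ‖ζ‖ < 1) (x : H) : lp (fun _ : ℕ => H) 2 :=
  ⟨fun n : ℕ => (starRingEnd ℂ ζ) ^ n • x, memℓp_kernel hζ x⟩

lemma kernel_apply {ζ : ℂ} (hζ : ‖ζ‖ < 1) (x : H) (n : ℕ) :
    (kernel hζ x : ∀ _ : ℕ, H) n = (starRingEnd ℂ ζ) ^ n • x := rfl

lemma norm_kernel_sq {ζ : ℂ} (hζ : ‖ζ‖ < 1) (x : H) :
    ‖kernel hζ x‖ ^ 2 = (1 - ‖ζ‖^2)⁻¹ * ‖x‖^2 := by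
  have h2 : (0:ℝ) < (2 : ℝ≥0∞).toReal := by norm_num
  have := lp.norm_rpow_eq_tsum h2 (kernel hζ x)
  have h2' : (2 : ℝ≥0∞).toReal = 2 := by norm_num
  rw [h2'] at this
  simp only [Real.rpow_two] at this
  rw [this]
  have hterm : ∀ n : ℕ, ‖(kernel hζ x : ∀ _ : ℕ, H) n‖ ^ 2 = (‖ζ‖^2) ^ n * ‖x‖^2 := by
    intro n
    rw [kernel_apply, norm_smul, norm_pow, RCLike.norm_conj, mul_pow, ← pow_mul, ← pow_mul,
      mul_comm 2 n, pow_mul]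
  rw [tsum_congr hterm, tsum_mul_right,
    tsum_geometric_of_lt_one (by positivity) (by nlinarith [norm_nonneg ζ])]

lemma inner_kernel {ζ : ℂ} (hζ : ‖ζ‖ < 1) (w : H) (g : lp (fun _ : ℕ => H) 2) :
    (inner ℂ (kernel hζ w) g : ℂ) = inner ℂ w (evalAux ζ g) := by
  rw [lp.inner_eq_tsum]
  have h1 : ∀ n : ℕ, (inner ℂ ((kernel hζ w : ∀ _ : ℕ, H) n) ((g : ∀ _ : ℕ, H) n) : ℂ)
      = inner ℂ w (ζ ^ n • (g : ∀ _ : ℕ, H) n) := by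
    intro n
    rw [kernel_apply, inner_smul_left, inner_smul_right, map_pow]
    simp
  rw [tsum_congr h1]
  exact ((summable_pow_smul hζ g).hasSum.mapL (innerSL ℂ w)).tsum_eq

lemma norm_evalAux_le {ζ : ℂ} (hζ : ‖ζ‖ < 1) (g : lp (fun _ : ℕ => H) 2) :
    ‖evalAux ζ g‖ ≤ Real.sqrt (1 - ‖ζ‖^2)⁻¹ * ‖g‖ := by
  set w := evalAux ζ g with hw
  have hks : ‖kernel hζ w‖ = Real.sqrt (1 - ‖ζ‖^2)⁻¹ * ‖w‖ := by
    have h0 : (0:ℝ) ≤ (1 - ‖ζ‖^2)⁻¹ := by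
      have h : ‖ζ‖^2 < 1 := by nlinarith [norm_nonneg ζ]
      have : (0:ℝ) < 1 - ‖ζ‖^2 := by linarith
      positivity
    rw [← Real.sqrt_sq (norm_nonneg (kernel hζ w)), norm_kernel_sq hζ w,
      Real.sqrt_mul h0, Real.sqrt_sq (norm_nonneg w)]
  have hsq : ‖w‖^2 ≤ Real.sqrt (1 - ‖ζ‖^2)⁻¹ * ‖w‖ * ‖g‖ := by
    have h1 : (inner ℂ w w : ℂ) = ((‖w‖:ℂ))^2 := by
      rw [inner_self_eq_norm_sq_to_K]; norm_cast
    have h2 : ‖w‖^2 = ‖(inner ℂ w w : ℂ)‖ := by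
      rw [h1]; rw [norm_pow]; simp
    rw [h2, ← inner_kernel hζ w g]
    calc ‖(inner ℂ (kernel hζ w) g : ℂ)‖ ≤ ‖kernel hζ w‖ * ‖g‖ := norm_inner_le_norm _ _
    _ = Real.sqrt (1 - ‖ζ‖^2)⁻¹ * ‖w‖ * ‖g‖ := by rw [hks]
  rcases eq_or_lt_of_le (norm_nonneg w) with h | h
  · rw [← h]
    positivity
  · nlinarith

/-- the evaluation functional as a continuous linear map -/
def eval {ζ : ℂ} (hζ : ‖ζ‖ < 1) : lp (fun _ : ℕ => H) 2 →L[ℂ] H :=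
  LinearMap.mkContinuous
    { toFun := evalAux ζ, map_add' := evalAux_add hζ, map_smul' := evalAux_smul }
    (Real.sqrt (1 - ‖ζ‖^2)⁻¹) (norm_evalAux_le hζ)

lemma eval_apply {ζ : ℂ} (hζ : ‖ζ‖ < 1) (g : lp (fun _ : ℕ => H) 2) :
    eval hζ g = evalAux ζ g := rfl

lemma norm_kernel {ζ : ℂ} (hζ : ‖ζ‖ < 1) (x : H) :
    ‖kernel hζ x‖ = Real.sqrt (1 - ‖ζ‖^2)⁻¹ * ‖x‖ := by
  have h : ‖ζ‖^2 < 1 := by nlinarith [norm_nonneg ζ]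
  have h1 : (0:ℝ) < 1 - ‖ζ‖^2 := by linarith
  have h0 : (0:ℝ) ≤ (1 - ‖ζ‖^2)⁻¹ := by positivity
  rw [← Real.sqrt_sq (norm_nonneg (kernel hζ x)), norm_kernel_sq hζ x,
    Real.sqrt_mul h0, Real.sqrt_sq (norm_nonneg x)]

section Single

lemma single_add (i : ℕ) (a b : H) :
    lp.single 2 i (a + b) = (lp.single 2 i a : lp (fun _ : ℕ => H) 2) + lp.single 2 i b := by
  refine lp.ext (funext fun j => ?_)
  rw [lp.coeFn_add, Pi.add_apply]
  by_cases hj : j = i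
  · subst hj; simp [lp.single_apply_self]
  · simp [lp.single_apply_ne _ _ _ hj]

/-- inclusion of `H` at coordinate `i`, as a linear map -/
def singleLM (i : ℕ) : H →ₗ[ℂ] lp (fun _ : ℕ => H) 2 where
  toFun := fun x => (lp.single 2 i x : lp (fun _ : ℕ => H) 2)
  map_add' := single_add i
  map_smul' := fun c a => lp.single_smul (E := fun _ : ℕ => H) 2 i c a

/-- inclusion of `H` at coordinate `i` -/
def singleCLM (i : ℕ) : H →L[ℂ] lp (fun _ : ℕ => H) 2 :=
  LinearMap.mkContinuous (singleLM i)
    1 (fun x => by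
      show ‖(lp.single 2 i x : lp (fun _ : ℕ => H) 2)‖ ≤ 1 * ‖x‖
      rw [one_mul]
      exact le_of_eq (lp.norm_single (E := fun _ : ℕ => H) (p := 2) (by norm_num) i x))

lemma singleCLM_apply (i : ℕ) (x : H) : singleCLM i x = (lp.single 2 i x : lp (fun _ : ℕ => H) 2) :=
  rfl

/-- coordinate projection, as a linear map -/
def coordLM (n : ℕ) : lp (fun _ : ℕ => H) 2 →ₗ[ℂ] H where
  toFun := fun g : lp (fun _ : ℕ => H) 2 => (g : ∀ _ : ℕ, H) n
  map_add' := fun f g => congrFun (lp.coeFn_add f g) n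
  map_smul' := fun c f => congrFun (lp.coeFn_smul c f) n

/-- coordinate projection -/
def coordCLM (n : ℕ) : lp (fun _ : ℕ => H) 2 →L[ℂ] H :=
  LinearMap.mkContinuous (coordLM n)
    1 (fun g => by rw [one_mul]; exact coord_le_norm g n)

end Single

section Ser

variable (T : lp (fun _ : ℕ => H) 2 →L[ℂ] lp (fun _ : ℕ => H) 2)

/-- Taylor coefficients of the symbol -/
def coeffOp (n : ℕ) : H →L[ℂ] H := (coordCLM n).comp (T.comp (singleCLM 0))

lemma coeffOp_apply (n : ℕ) (x : H) :
    coeffOp T n x = (T (lp.single 2 0 x) : ∀ _ : ℕ, H) n := rfl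

lemma norm_coeffOp_le (n : ℕ) : ‖coeffOp T n‖ ≤ ‖T‖ := by
  refine ContinuousLinearMap.opNorm_le_bound _ (norm_nonneg T) fun x => ?_
  rw [coeffOp_apply]
  calc ‖(T (lp.single 2 0 x) : ∀ _ : ℕ, H) n‖ ≤ ‖T (lp.single 2 0 x)‖ := coord_le_norm _ n
  _ ≤ ‖T‖ * ‖(lp.single 2 0 x : lp (fun _ : ℕ => H) 2)‖ := T.le_opNorm _
  _ = ‖T‖ * ‖x‖ := by rw [lp.norm_single (E := fun _ : ℕ => H) (by norm_num) 0 x]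

/-- the power series of the symbol -/
def series : FormalMultilinearSeries ℂ ℂ (H →L[ℂ] H) := fun n =>
  ContinuousMultilinearMap.mkPiRing ℂ (Fin n) (coeffOp T n)

lemma one_le_radius : 1 ≤ (series T).radius := by
  apply ENNReal.le_of_forall_nnreal_lt
  intro r hr
  have hr1 : (r : ℝ) ≤ 1 := by
    have := le_of_lt hr
    exact_mod_cast this
  refine FormalMultilinearSeries.le_radius_of_bound _ ‖T‖ fun n => ?_
  have h1 : ‖series T n‖ = ‖coeffOp T n‖ :=
    ContinuousMultilinearMap.norm_mkPiRing (𝕜 := ℂ) (ι := Fin n) (coeffOp T n)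
  have h2 : (r : ℝ) ^ n ≤ 1 := pow_le_one₀ r.coe_nonneg hr1
  calc ‖series T n‖ * (r:ℝ) ^ n ≤ ‖T‖ * 1 := by
        refine mul_le_mul ?_ h2 (by positivity) (norm_nonneg T)
        rw [h1]; exact norm_coeffOp_le T n
  _ = ‖T‖ := mul_one _

/-- the symbol -/
def S : ℂ → (H →L[ℂ] H) := (series T).sum

lemma mem_ball_radius {ζ : ℂ} (hζ : ‖ζ‖ < 1) : ζ ∈ Metric.eball (0:ℂ) (series T).radius := by
  rw [Metric.mem_eball, edist_zero_right]
  refine lt_of_lt_of_le ?_ (one_le_radius T)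
  rw [← ENNReal.coe_one, enorm_eq_nnnorm, ENNReal.coe_lt_coe]
  exact_mod_cast hζ

lemma hasSum_S {ζ : ℂ} (hζ : ‖ζ‖ < 1) (x : H) :
    HasSum (fun n : ℕ => ζ ^ n • coeffOp T n x) (S T ζ x) := by
  have h := (series T).hasSum (mem_ball_radius T hζ)
  have h2 : ∀ n : ℕ, (series T n fun _ => ζ) = ζ ^ n • coeffOp T n := by
    intro n
    rw [series, ContinuousMultilinearMap.mkPiRing_apply, Finset.prod_const,
      Finset.card_univ, Fintype.card_fin]
  rw [funext h2] at h
  have := h.mapL (ContinuousLinearMap.apply ℂ H x)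
  simpa [S] using this

lemma S_apply {ζ : ℂ} (hζ : ‖ζ‖ < 1) (x : H) :
    S T ζ x = evalAux ζ (T (lp.single 2 0 x)) := by
  rw [← (hasSum_S T hζ x).tsum_eq]
  exact tsum_congr fun n => by rw [coeffOp_apply]

lemma S_differentiableOn : DifferentiableOn ℂ (S T) (ball (0:ℂ) 1) := by
  have hpos : 0 < (series T).radius := lt_of_lt_of_le one_pos (one_le_radius T)
  have h := ((series T).hasFPowerSeriesOnBall hpos).differentiableOn
  refine h.mono fun ζ hζ => ?_
  rw [mem_ball_zero_iff] at hζ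
  simpa using mem_ball_radius T hζ

end Ser

section Shift

lemma memℓp_shift (u : lp (fun _ : ℕ => H) 2) :
    Memℓp (E := fun _ : ℕ => H)
      (fun n : ℕ => match n with | 0 => (0 : H) | (k+1) => (u : ∀ _ : ℕ, H) k) 2 := by
  apply memℓp_gen
  have h2 : (2 : ℝ≥0∞).toReal = 2 := by norm_num
  have hu : Summable (fun n : ℕ => ‖(u : ∀ _ : ℕ, H) n‖ ^ (2:ℝ)) := by
    have := lp.memℓp u
    rw [memℓp_gen_iff (by norm_num : (0:ℝ) < (2 : ℝ≥0∞).toReal)] at this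
    rw [h2] at this
    exact this
  simp only [h2] at hu ⊢
  rw [← summable_nat_add_iff 1]
  simpa using hu

/-- the shift (multiplication by `ζ`) -/
def shift (u : lp (fun _ : ℕ => H) 2) : lp (fun _ : ℕ => H) 2 :=
  ⟨fun n : ℕ => match n with | 0 => (0 : H) | (k+1) => (u : ∀ _ : ℕ, H) k, memℓp_shift u⟩

lemma shift_apply_zero (u : lp (fun _ : ℕ => H) 2) : (shift u : ∀ _ : ℕ, H) 0 = 0 := rfl

lemma shift_apply_succ (u : lp (fun _ : ℕ => H) 2) (n : ℕ) :
    (shift u : ∀ _ : ℕ, H) (n + 1) = (u : ∀ _ : ℕ, H) n := rfl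

lemma shift_single (k : ℕ) (x : H) :
    shift (lp.single 2 k x) = (lp.single 2 (k+1) x : lp (fun _ : ℕ => H) 2) := by
  refine lp.ext (funext fun j => ?_)
  match j with
  | 0 =>
    rw [shift_apply_zero]
    exact (lp.single_apply_ne (E := fun _ : ℕ => H) 2 (k+1) x (by omega : (0:ℕ) ≠ k+1)).symm
  | (n+1) =>
    rw [shift_apply_succ]
    by_cases h : n = k
    · subst h
      rw [lp.single_apply_self (E := fun _ : ℕ => H), lp.single_apply_self (E := fun _ : ℕ => H)]
    · rw [lp.single_apply_ne (E := fun _ : ℕ => H) 2 k x h, lp.single_apply_ne (E := fun _ : ℕ => H) 2 (k+1) x (by omega : n+1 ≠ k+1)]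

end Shift

section Main

variable (T : lp (fun _ : ℕ => H) 2 →L[ℂ] lp (fun _ : ℕ => H) 2)
variable (hcomm : ∀ u v : lp (fun _ : ℕ => H) 2,
      ((v : ∀ _ : ℕ, H) 0 = 0 ∧ ∀ n : ℕ, (v : ∀ _ : ℕ, H) (n + 1) = (u : ∀ _ : ℕ, H) n) →
      (T v : ∀ _ : ℕ, H) 0 = 0 ∧ ∀ n : ℕ, (T v : ∀ _ : ℕ, H) (n + 1) = (T u : ∀ _ : ℕ, H) n)

include hcomm

lemma evalAux_T_shift {ζ : ℂ} (hζ : ‖ζ‖ < 1) (u : lp (fun _ : ℕ => H) 2) :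
    evalAux ζ (T (shift u)) = ζ • evalAux ζ (T u) := by
  obtain ⟨h0, hS⟩ := hcomm u (shift u) ⟨shift_apply_zero u, shift_apply_succ u⟩
  unfold evalAux
  rw [Summable.tsum_eq_zero_add (summable_pow_smul hζ (T (shift u)))]
  rw [h0, smul_zero, zero_add]
  have : ∀ n : ℕ, ζ ^ (n+1) • (T (shift u) : ∀ _ : ℕ, H) (n+1)
      = ζ • (ζ ^ n • (T u : ∀ _ : ℕ, H) n) := by
    intro n
    rw [hS n, pow_succ', mul_smul]
  rw [tsum_congr this, tsum_const_smul'' ζ]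

lemma evalAux_T_single {ζ : ℂ} (hζ : ‖ζ‖ < 1) (k : ℕ) (x : H) :
    evalAux ζ (T (lp.single 2 k x)) = ζ ^ k • evalAux ζ (T (lp.single 2 0 x)) := by
  induction k with
  | zero => rw [pow_zero, one_smul]
  | succ k ih =>
    rw [← shift_single, evalAux_T_shift T hcomm hζ, ih, smul_smul, pow_succ']

lemma mult {ζ : ℂ} (hζ : ‖ζ‖ < 1) (f : lp (fun _ : ℕ => H) 2) :
    S T ζ (evalAux ζ f) = evalAux ζ (T f) := by
  have hsingle : HasSum (fun i : ℕ => (lp.single 2 i ((f : ∀ _ : ℕ, H) i) :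
      lp (fun _ : ℕ => H) 2)) f :=
    lp.hasSum_single (by norm_num) f
  have h1 :
      HasSum (fun i : ℕ => evalAux ζ (T (lp.single 2 i ((f : ∀ _ : ℕ, H) i))))
        (evalAux ζ (T f)) := by
    have := hsingle.mapL ((eval hζ).comp T)
    simpa [eval_apply] using this
  have h2 : HasSum (fun i : ℕ => ζ ^ i • S T ζ ((f : ∀ _ : ℕ, H) i)) (evalAux ζ (T f)) := by
    refine h1.congr_fun fun i => ?_
    rw [evalAux_T_single T hcomm hζ, ← S_apply T hζ]
  have h3 : HasSum (fun i : ℕ => ζ ^ i • (f : ∀ _ : ℕ, H) i) (evalAux ζ f) :=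
    (summable_pow_smul hζ f).hasSum
  have h4 := h3.mapL (S T ζ)
  have h5 : HasSum (fun i : ℕ => ζ ^ i • S T ζ ((f : ∀ _ : ℕ, H) i)) (S T ζ (evalAux ζ f)) := by
    refine h4.congr_fun fun i => ?_
    rw [map_smul]
  exact h5.unique h2

lemma norm_S_le {ζ : ℂ} (hζ : ‖ζ‖ < 1) : ‖S T ζ‖ ≤ ‖T‖ := by
  refine ContinuousLinearMap.opNorm_le_bound _ (norm_nonneg T) fun x => ?_
  have h : ‖ζ‖^2 < 1 := by nlinarith [norm_nonneg ζ]
  have h1 : (0:ℝ) < 1 - ‖ζ‖^2 := by linarith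
  have hc : (0:ℝ) < (1 - ‖ζ‖^2)⁻¹ := by positivity
  set c : ℝ := (1 - ‖ζ‖^2)⁻¹ with hcdef
  have hk : evalAux ζ (kernel hζ x) = c • x := by
    unfold evalAux
    have hterm : ∀ n : ℕ, ζ ^ n • (kernel hζ x : ∀ _ : ℕ, H) n = ((‖ζ‖^2)^n : ℝ) • x := by
      intro n
      rw [kernel_apply, smul_smul, ← mul_pow, Complex.mul_conj]
      rw [← Complex.ofReal_pow, ← Complex.coe_algebraMap, algebraMap_smul]
      congr 2
      rw [Complex.normSq_eq_norm_sq]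
    rw [tsum_congr hterm,
      Summable.tsum_smul_const (summable_geometric_of_lt_one (by positivity) h),
      tsum_geometric_of_lt_one (by positivity) h]
  have hmult := mult T hcomm hζ (kernel hζ x)
  rw [hk, (S T ζ).map_smul_of_tower c x] at hmult
  have hsqrt : Real.sqrt c * Real.sqrt c = c := Real.mul_self_sqrt hc.le
  have hstep : c * ‖S T ζ x‖ ≤ c * (‖T‖ * ‖x‖) := by
    calc c * ‖S T ζ x‖ = ‖c • S T ζ x‖ := by
          rw [norm_smul, Real.norm_eq_abs, abs_of_pos hc]
    _ = ‖evalAux ζ (T (kernel hζ x))‖ := by rw [hmult]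
    _ ≤ Real.sqrt c * ‖T (kernel hζ x)‖ := norm_evalAux_le hζ _
    _ ≤ Real.sqrt c * (‖T‖ * ‖kernel hζ x‖) := by
          refine mul_le_mul_of_nonneg_left (T.le_opNorm _) (Real.sqrt_nonneg c)
    _ = Real.sqrt c * (‖T‖ * (Real.sqrt c * ‖x‖)) := by rw [norm_kernel hζ x]
    _ = (Real.sqrt c * Real.sqrt c) * (‖T‖ * ‖x‖) := by ring
    _ = c * (‖T‖ * ‖x‖) := by rw [hsqrt]
  exact le_of_mul_le_mul_left hstep hc

end Main

end

end Stmt10Aux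

open Stmt10Aux in
/-- Operator-valued commutant lifting: a bounded operator `T` on the `H`-valued Hardy
space `H²(𝔻) ⊗ H` (realized as `ℓ²(ℕ, H)` of Taylor coefficients) commuting with
multiplication by `ζ` (the shift) is given by multiplication by an `L(H)`-valued
function `S`, analytic on `𝔻`, with `‖S(ζ)‖ ≤ ‖T‖` there; and if `T` is a contraction
then each `S(ζ)` is a contraction. -/
theorem stmt10 {H : Type*} [NormedAddCommGroup H] [InnerProductSpace ℂ H]
    [CompleteSpace H]
    (T : lp (fun _ : ℕ => H) 2 →L[ℂ] lp (fun _ : ℕ => H) 2)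
    (hcomm : ∀ u v : lp (fun _ : ℕ => H) 2,
      ((v : ∀ _ : ℕ, H) 0 = 0 ∧ ∀ n : ℕ, (v : ∀ _ : ℕ, H) (n + 1) = (u : ∀ _ : ℕ, H) n) →
      (T v : ∀ _ : ℕ, H) 0 = 0 ∧ ∀ n : ℕ, (T v : ∀ _ : ℕ, H) (n + 1) = (T u : ∀ _ : ℕ, H) n) :
    ∃ S : ℂ → H →L[ℂ] H,
      DifferentiableOn ℂ S (ball (0 : ℂ) 1) ∧
      (∀ ζ ∈ ball (0 : ℂ) 1, ‖S ζ‖ ≤ ‖T‖) ∧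
      (∀ (f : lp (fun _ : ℕ => H) 2), ∀ ζ ∈ ball (0 : ℂ) 1,
        S ζ (∑' n : ℕ, ζ ^ n • (f : ∀ _ : ℕ, H) n) =
          ∑' n : ℕ, ζ ^ n • (T f : ∀ _ : ℕ, H) n) ∧
      (‖T‖ ≤ 1 → ∀ ζ ∈ ball (0 : ℂ) 1, ‖S ζ‖ ≤ 1) := by
  refine ⟨S T, S_differentiableOn T, ?_, ?_, ?_⟩
  · intro ζ hζ
    exact norm_S_le T hcomm (mem_ball_zero_iff.mp hζ)
  · intro f ζ hζ
    exact mult T hcomm (mem_ball_zero_iff.mp hζ) f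
  · intro hT ζ hζ
    exact (norm_S_le T hcomm (mem_ball_zero_iff.mp hζ)).trans hT
end
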